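/- Let x and y be nonzero complex numbers, neither of which is a root of unity, and suppose there exist nonzero integers c and d with x^c = y^d. Then there exist a nonzero complex number λ that is not a root of unity, nonzero integers b and b', and a root of unity ζ such that x = λ^b and y = ζ·λ^{b'}. -/

import Mathlib

private lemma aux_ru {w : ℂ} {m : ℕ} (hm : w ^ m = 1) (t : ℤ) : (w ^ t) ^ m = 1 := by
  rw [← zpow_natCast (w ^ t), ← zpow_mul, mul_comm, zpow_mul, zpow_natCast, hm, one_zpow]

/-- multiplicatively dependent nonzero complex numbers, neither a root of
unity, have the form `x = λ^b`, `y = ζ λ^{b'}` for some `λ` not a root of unity, nonzero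
integers `b, b'` and a root of unity `ζ`. -/
theorem stmt_6 (x y : ℂ) (hx : x ≠ 0) (hy : y ≠ 0)
    (hxru : ¬ ∃ k : ℕ, 0 < k ∧ x ^ k = 1)
    (hyru : ¬ ∃ k : ℕ, 0 < k ∧ y ^ k = 1)
    (c d : ℤ) (hc : c ≠ 0) (hd : d ≠ 0) (h : x ^ c = y ^ d) :
    ∃ (l : ℂ) (b b' : ℤ) (ζ : ℂ), l ≠ 0 ∧ (¬ ∃ k : ℕ, 0 < k ∧ l ^ k = 1) ∧
      b ≠ 0 ∧ b' ≠ 0 ∧ (∃ k : ℕ, 0 < k ∧ ζ ^ k = 1) ∧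
      x = l ^ b ∧ y = ζ * l ^ b' := by
  set n : ℕ := Int.gcd c d with hn
  have hnpos : 0 < n := Int.gcd_pos_of_ne_zero_left d hc
  set g : ℤ := (n : ℤ) with hg
  set c₁ : ℤ := c / g with hc₁
  set d₁ : ℤ := d / g with hd₁
  have hcc : g * c₁ = c := Int.mul_ediv_cancel' (Int.gcd_dvd_left c d)
  have hdd : g * d₁ = d := Int.mul_ediv_cancel' (Int.gcd_dvd_right c d)
  have hc₁0 : c₁ ≠ 0 := fun h0 => hc (by rw [← hcc, h0, mul_zero])
  have hd₁0 : d₁ ≠ 0 := fun h0 => hd (by rw [← hdd, h0, mul_zero])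
  have hcop : Int.gcd c₁ d₁ = 1 := Int.gcd_div_gcd_div_gcd hnpos
  obtain ⟨u, v, huv⟩ : ∃ u v : ℤ, u * d₁ + v * c₁ = 1 := by
    refine ⟨Int.gcdB c₁ d₁, Int.gcdA c₁ d₁, ?_⟩
    have h2 := Int.gcd_eq_gcd_ab c₁ d₁
    rw [hcop] at h2
    push_cast at h2
    linarith [h2]
  set ω : ℂ := x ^ c₁ * (y ^ d₁)⁻¹ with hω
  have hω0 : ω ≠ 0 := mul_ne_zero (zpow_ne_zero _ hx) (inv_ne_zero (zpow_ne_zero _ hy))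
  have hωn : ω ^ n = 1 := by
    have h3 : ω ^ (g : ℤ) = 1 := by
      rw [hω, mul_zpow, ← zpow_mul, inv_zpow, ← zpow_mul, mul_comm c₁, mul_comm d₁,
        hcc, hdd, h, mul_inv_cancel₀ (zpow_ne_zero _ hy)]
    rwa [hg, zpow_natCast] at h3
  have hxc : x ^ c₁ = ω * y ^ d₁ := by
    rw [hω, inv_mul_cancel_right₀ (zpow_ne_zero _ hy)]
  have hyd : y ^ d₁ = ω⁻¹ * x ^ c₁ := by
    rw [hxc]; field_simp
  clear_value ω
  set μ : ℂ := x ^ u * y ^ v with hμ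
  have hμ0 : μ ≠ 0 := mul_ne_zero (zpow_ne_zero _ hx) (zpow_ne_zero _ hy)
  clear_value μ
  have e1 : μ ^ d₁ = x ^ (u * d₁) * (y ^ d₁) ^ v := by
    rw [hμ, mul_zpow, show (x ^ u) ^ d₁ = x ^ (u * d₁) from (zpow_mul x u d₁).symm,
      show (y ^ v) ^ d₁ = (y ^ d₁) ^ v from by rw [← zpow_mul, mul_comm, zpow_mul]]
  have hμd : μ ^ d₁ = ω ^ (-v) * x := by
    rw [e1, hyd, mul_zpow, inv_zpow, ← zpow_neg,
      show (x ^ c₁) ^ v = x ^ (c₁ * v) from (zpow_mul x c₁ v).symm,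
      mul_left_comm, ← zpow_add₀ hx, show u * d₁ + c₁ * v = 1 by linarith, zpow_one]
  have e2 : μ ^ c₁ = (x ^ c₁) ^ u * y ^ (v * c₁) := by
    rw [hμ, mul_zpow, show (x ^ u) ^ c₁ = (x ^ c₁) ^ u from by
        rw [← zpow_mul, mul_comm, zpow_mul],
      show (y ^ v) ^ c₁ = y ^ (v * c₁) from (zpow_mul y v c₁).symm]
  have hμc : μ ^ c₁ = ω ^ u * y := by
    rw [e2, hxc, mul_zpow, show (y ^ d₁) ^ u = y ^ (d₁ * u) from (zpow_mul y d₁ u).symm,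
      mul_assoc, ← zpow_add₀ hy, show d₁ * u + v * c₁ = 1 by linarith, zpow_one]
  obtain ⟨η, hη⟩ : ∃ η : ℂ, η ^ (d₁.natAbs : ℤ) = ω ^ (v * d₁.sign) := by
    obtain ⟨η, hη⟩ := Complex.isAlgClosed.exists_pow_nat_eq (ω ^ (v * d₁.sign))
      (Int.natAbs_pos.mpr hd₁0)
    exact ⟨η, by rw [zpow_natCast, hη]⟩
  have hη0 : η ≠ 0 := by
    intro h0
    rw [h0, zero_zpow _ (by exact_mod_cast Int.natAbs_ne_zero.mpr hd₁0)] at hη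
    exact zpow_ne_zero _ hω0 hη.symm
  have hηd : η ^ d₁ = ω ^ v := by
    rcases hd₁0.lt_or_gt with hlt | hlt
    · have h1 : (d₁.natAbs : ℤ) = -d₁ := Int.ofNat_natAbs_of_nonpos hlt.le
      have h2 : d₁.sign = -1 := Int.sign_eq_neg_one_of_neg hlt
      rw [h1, h2, mul_neg_one, zpow_neg, zpow_neg] at hη
      rw [← inv_inv (ω ^ v), ← hη, inv_inv]
    · have h1 : (d₁.natAbs : ℤ) = d₁ := Int.natAbs_of_nonneg hlt.le
      have h2 : d₁.sign = 1 := Int.sign_eq_one_of_pos hlt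
      rwa [h1, h2, mul_one] at hη
  set l : ℂ := η * μ with hldef
  have hl0 : l ≠ 0 := mul_ne_zero hη0 hμ0
  have hl : l ^ d₁ = x := by
    rw [hldef, mul_zpow, hηd, hμd, ← mul_assoc, ← zpow_add₀ hω0, add_neg_cancel,
      zpow_zero, one_mul]
  set ζ : ℂ := η ^ (-c₁) * ω ^ (-u) with hζ
  clear_value l ζ
  have hlc : l ^ c₁ = η ^ c₁ * (ω ^ u * y) := by rw [hldef, mul_zpow, hμc]
  have hy2 : y = ζ * l ^ c₁ := by
    rw [hζ, hlc]
    calc y = (η ^ (-c₁) * η ^ c₁) * ((ω ^ (-u) * ω ^ u) * y) := by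
          rw [← zpow_add₀ hη0, ← zpow_add₀ hω0]; simp
      _ = η ^ (-c₁) * ω ^ (-u) * (η ^ c₁ * (ω ^ u * y)) := by ring
  have hηm : η ^ (d₁.natAbs * n) = 1 := by
    rw [pow_mul, ← zpow_natCast η, hη, aux_ru hωn]
  have hωm : ω ^ (d₁.natAbs * n) = 1 := by
    rw [mul_comm, pow_mul, hωn, one_pow]
  refine ⟨l, d₁, c₁, ζ, hl0, ?_, hd₁0, hc₁0,
    ⟨d₁.natAbs * n, by positivity, by rw [hζ, mul_pow, aux_ru hηm, aux_ru hωm, one_mul]⟩,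
    hl.symm, hy2⟩
  rintro ⟨k, hk, hlk⟩
  exact hxru ⟨k, hk, by rw [← hl, aux_ru hlk]⟩
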